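/- Let γ : ℝ → ℂ be a C¹ loop and let p, q ∈ ℂ with γ(t) ≠ p and γ(t) ≠ q for all t, p ≠ q. Suppose the set Z = {t ∈ [0,1) : γ(t) = q + s·(p − q) for some real s with 0 < s < 1} is finite and for every t ∈ Z one has det(q − p, deriv γ t) ≠ 0, where det(a,b) := a.re·b.im − a.im·b.re. Then ind_p(γ) − ind_q(γ) = ∑_{t ∈ Z} sign(det(q − p, deriv γ t)). -/

import Mathlib

open scoped BigOperators

section AuxIndexJump
open Set Filter

lemma ev_slope_pos {φ : ℝ → ℝ} {d t₀ : ℝ} (h : HasDerivAt φ d t₀) (hd : 0 < d) :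
    ∀ᶠ t in nhdsWithin t₀ {t₀}ᶜ, 0 < (φ t - φ t₀) / (t - t₀) := by
  have hs := hasDerivAt_iff_tendsto_slope.1 h
  have := hs (Ioi_mem_nhds hd)
  filter_upwards [this] with t ht
  simpa [slope_def_field, div_eq_inv_mul, mul_comm] using ht

lemma ev_slope_neg {φ : ℝ → ℝ} {d t₀ : ℝ} (h : HasDerivAt φ d t₀) (hd : d < 0) :
    ∀ᶠ t in nhdsWithin t₀ {t₀}ᶜ, (φ t - φ t₀) / (t - t₀) < 0 := by
  have hs := hasDerivAt_iff_tendsto_slope.1 h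
  have := hs (Iio_mem_nhds hd)
  filter_upwards [this] with t ht
  simpa [slope_def_field, div_eq_inv_mul, mul_comm] using ht

lemma floor_eq_of_no_int (φ : ℝ → ℝ) (hcont : Continuous φ) (u v : ℝ) (huv : u ≤ v)
    (h : ∀ t ∈ Icc u v, ∀ m : ℤ, φ t ≠ m) : ⌊φ u⌋ = ⌊φ v⌋ := by
  rcases lt_trichotomy (⌊φ u⌋) (⌊φ v⌋) with hlt | he | hgt
  · exfalso
    have h1 : φ u ≤ (⌊φ v⌋ : ℝ) := by
      have : (⌊φ u⌋ : ℝ) + 1 ≤ (⌊φ v⌋ : ℝ) := by exact_mod_cast Int.add_one_le_iff.2 hlt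
      linarith [Int.lt_floor_add_one (φ u)]
    have h2 : ((⌊φ v⌋ : ℝ)) ∈ Icc (φ u) (φ v) := ⟨h1, Int.floor_le _⟩
    obtain ⟨t, ht, hφt⟩ := intermediate_value_Icc huv hcont.continuousOn h2
    exact h t ht _ hφt
  · exact he
  · exfalso
    have h1 : φ v ≤ (⌊φ u⌋ : ℝ) := by
      have : (⌊φ v⌋ : ℝ) + 1 ≤ (⌊φ u⌋ : ℝ) := by exact_mod_cast Int.add_one_le_iff.2 hgt
      linarith [Int.lt_floor_add_one (φ v)]
    have h2 : ((⌊φ u⌋ : ℝ)) ∈ Icc (φ v) (φ u) := ⟨h1, Int.floor_le _⟩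
    obtain ⟨t, ht, hφt⟩ := intermediate_value_Icc' huv hcont.continuousOn h2
    exact h t ht _ hφt

lemma count_lemma (φ φ' : ℝ → ℝ) (hd : ∀ t, HasDerivAt φ (φ' t) t) :
    ∀ (n : ℕ) (T : Finset ℝ) (a b : ℝ), T.card = n → a ≤ b →
      (∀ t ∈ Set.Icc a b, ((∃ m : ℤ, φ t = m) ↔ t ∈ T)) →
      (∀ t ∈ T, t ∈ Set.Ioo a b) →
      (∀ t ∈ T, φ' t ≠ 0) →
      (⌊φ b⌋ - ⌊φ a⌋ : ℤ) = ∑ t ∈ T, (if 0 < φ' t then (1:ℤ) else -1) := by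
  classical
  have hcont : Continuous φ := by
    rw [continuous_iff_continuousAt]; exact fun t => (hd t).continuousAt
  intro n
  induction n with
  | zero =>
    intro T a b hcard hab hT _ _
    have hTe : T = ∅ := Finset.card_eq_zero.1 hcard
    subst hTe
    have : ⌊φ a⌋ = ⌊φ b⌋ := floor_eq_of_no_int φ hcont a b hab (by
      intro t ht m hm
      have := (hT t ht).1 ⟨m, hm⟩
      simpa using this)
    simp [this]
  | succ n ih =>
    intro T a b hcard hab hT hTsub hreg
    have hne : T.Nonempty := Finset.card_pos.1 (by omega)
    set t₀ := T.min' hne with ht₀def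
    have ht₀T : t₀ ∈ T := T.min'_mem hne
    have ht₀ab : t₀ ∈ Set.Ioo a b := hTsub _ ht₀T
    obtain ⟨m₀, hm₀⟩ := (hT t₀ ⟨le_of_lt ht₀ab.1, le_of_lt ht₀ab.2⟩).2 ht₀T
    set T' := T.erase t₀ with hT'def
    have hcard' : T'.card = n := by
      rw [hT'def, Finset.card_erase_of_mem ht₀T, hcard]; omega
    -- a bound β below all other crossings
    obtain ⟨β, hβ1, hβ2, hβ3⟩ : ∃ β, t₀ < β ∧ β ≤ b ∧ ∀ t ∈ T', β ≤ t := by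
      by_cases hne' : T'.Nonempty
      · refine ⟨min (T'.min' hne') b, lt_min ?_ ht₀ab.2, min_le_right _ _,
          fun t ht => le_trans (min_le_left _ _) (T'.min'_le t ht)⟩
        have := T'.min'_mem hne'
        rcases Finset.mem_erase.1 this with ⟨hne0, hmem⟩
        exact lt_of_le_of_ne (T.min'_le _ hmem) (Ne.symm hne0)
      · exact ⟨b, ht₀ab.2, le_refl b, fun t ht => absurd ⟨t, ht⟩ hne'⟩
    -- continuity eventualities
    have hcl : ∀ᶠ t in nhds t₀, (m₀ : ℝ) - 1 < φ t ∧ φ t < (m₀ : ℝ) + 1 := by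
      have : ContinuousAt φ t₀ := hcont.continuousAt
      have h1 : ∀ᶠ t in nhds t₀, φ t ∈ Ioo ((m₀:ℝ) - 1) ((m₀:ℝ)+1) := by
        apply this
        rw [hm₀]
        exact Ioo_mem_nhds (by linarith) (by linarith)
      filter_upwards [h1] with t ht using ⟨ht.1, ht.2⟩
    have hregt₀ := hreg t₀ ht₀T
    -- pick c' ∈ (a, t₀) and c ∈ (t₀, β)
    rcases lt_or_gt_of_ne hregt₀ with hneg | hpos
    · -- derivative negative at t₀ : φ > m₀ just left, φ < m₀ just right
      have hev := ev_slope_neg (hd t₀) hneg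
      -- left point c'
      have hL : ∃ c', c' ∈ Ioo a t₀ ∧ (m₀:ℝ) < φ c' ∧ φ c' < (m₀:ℝ) + 1 := by
        have hmem : Ioo a t₀ ∈ nhdsWithin t₀ (Iio t₀) := Ioo_mem_nhdsLT_of_mem ⟨ht₀ab.1, le_refl _⟩
        have hle : nhdsWithin t₀ (Iio t₀) ≤ nhdsWithin t₀ {t₀}ᶜ :=
          nhdsWithin_mono _ (fun x hx => ne_of_lt hx)
        have := (hev.filter_mono hle).and ((hcl.filter_mono nhdsWithin_le_nhds).and
          (Filter.eventually_mem_set.2 hmem))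
        obtain ⟨c', h1, ⟨h2a, h2b⟩, h3⟩ := this.exists
        refine ⟨c', h3, ?_, h2b⟩
        have hden : c' - t₀ < 0 := sub_neg.2 h3.2
        rcases div_neg_iff.1 h1 with ⟨hx, hy⟩ | ⟨hx, hy⟩
        · linarith
        · have : φ t₀ < φ c' := by linarith
          linarith [hm₀ ▸ this]
      obtain ⟨c', hc'mem, hc'1, hc'2⟩ := hL
      -- right point c
      have hR : ∃ c, c ∈ Ioo t₀ β ∧ (m₀:ℝ) - 1 < φ c ∧ φ c < (m₀:ℝ) := by
        have hmem : Ioo t₀ β ∈ nhdsWithin t₀ (Ioi t₀) := Ioo_mem_nhdsGT_of_mem ⟨le_refl _, hβ1⟩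
        have hle : nhdsWithin t₀ (Ioi t₀) ≤ nhdsWithin t₀ {t₀}ᶜ :=
          nhdsWithin_mono _ (fun x hx => ne_of_gt hx)
        have := (hev.filter_mono hle).and ((hcl.filter_mono nhdsWithin_le_nhds).and
          (Filter.eventually_mem_set.2 hmem))
        obtain ⟨c, h1, ⟨h2a, h2b⟩, h3⟩ := this.exists
        refine ⟨c, h3, h2a, ?_⟩
        have hden : 0 < c - t₀ := sub_pos.2 h3.1
        rcases div_neg_iff.1 h1 with ⟨hx, hy⟩ | ⟨hx, hy⟩
        · have : φ c < φ t₀ := by linarith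
          linarith [hm₀ ▸ this]
        · linarith
      obtain ⟨c, hcmem, hc1, hc2⟩ := hR
      -- floor at a equals m₀
      have hfa : ⌊φ a⌋ = m₀ := by
        have h1 : ⌊φ a⌋ = ⌊φ c'⌋ := by
          apply floor_eq_of_no_int φ hcont a c' (le_of_lt hc'mem.1)
          intro t ht m hm
          have htab : t ∈ Icc a b := ⟨ht.1, le_trans ht.2 (by linarith [hc'mem.2, ht₀ab.2])⟩
          have htT := (hT t htab).1 ⟨m, hm⟩
          have := T.min'_le t htT
          rw [← ht₀def] at this
          linarith [ht.2, hc'mem.2]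
        rw [h1, Int.floor_eq_iff]
        constructor <;> push_cast <;> linarith
      -- floor at c equals m₀ - 1
      have hfc : ⌊φ c⌋ = m₀ - 1 := by
        rw [Int.floor_eq_iff]
        constructor <;> push_cast <;> linarith
      -- apply IH on [c, b]
      have hIH := ih T' c b hcard' (le_trans (le_of_lt hcmem.2) hβ2)
        (by
          intro t ht
          constructor
          · intro hex
            have htab : t ∈ Icc a b := ⟨le_trans (le_of_lt (lt_trans ht₀ab.1 hcmem.1)) ht.1, ht.2⟩
            have htT := (hT t htab).1 hex
            refine Finset.mem_erase.2 ⟨?_, htT⟩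
            intro he; rw [he] at ht; linarith [ht.1, hcmem.1]
          · intro htT'
            have htT := Finset.mem_erase.1 htT' |>.2
            have := hTsub t htT
            exact (hT t ⟨le_of_lt this.1, le_of_lt this.2⟩).2 htT)
        (by
          intro t htT'
          have htT := Finset.mem_erase.1 htT' |>.2
          exact ⟨lt_of_lt_of_le hcmem.2 (hβ3 t htT'), (hTsub t htT).2⟩)
        (fun t htT' => hreg t (Finset.mem_erase.1 htT' |>.2))
      have hsum : ∑ t ∈ T, (if 0 < φ' t then (1:ℤ) else -1)
          = (if 0 < φ' t₀ then (1:ℤ) else -1) + ∑ t ∈ T', (if 0 < φ' t then (1:ℤ) else -1) :=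
        (Finset.add_sum_erase T _ ht₀T).symm
      rw [hsum, if_neg (not_lt.2 (le_of_lt hneg)), ← hIH, hfc, hfa]
      ring
    · -- derivative positive at t₀
      have hev := ev_slope_pos (hd t₀) hpos
      have hL : ∃ c', c' ∈ Ioo a t₀ ∧ (m₀:ℝ) - 1 < φ c' ∧ φ c' < (m₀:ℝ) := by
        have hmem : Ioo a t₀ ∈ nhdsWithin t₀ (Iio t₀) := Ioo_mem_nhdsLT_of_mem ⟨ht₀ab.1, le_refl _⟩
        have hle : nhdsWithin t₀ (Iio t₀) ≤ nhdsWithin t₀ {t₀}ᶜ :=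
          nhdsWithin_mono _ (fun x hx => ne_of_lt hx)
        have := (hev.filter_mono hle).and ((hcl.filter_mono nhdsWithin_le_nhds).and
          (Filter.eventually_mem_set.2 hmem))
        obtain ⟨c', h1, ⟨h2a, h2b⟩, h3⟩ := this.exists
        refine ⟨c', h3, h2a, ?_⟩
        have hden : c' - t₀ < 0 := sub_neg.2 h3.2
        rcases div_pos_iff.1 h1 with ⟨hx, hy⟩ | ⟨hx, hy⟩
        · linarith
        · have : φ c' < φ t₀ := by linarith
          linarith [hm₀ ▸ this]
      obtain ⟨c', hc'mem, hc'1, hc'2⟩ := hL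
      have hR : ∃ c, c ∈ Ioo t₀ β ∧ (m₀:ℝ) < φ c ∧ φ c < (m₀:ℝ) + 1 := by
        have hmem : Ioo t₀ β ∈ nhdsWithin t₀ (Ioi t₀) := Ioo_mem_nhdsGT_of_mem ⟨le_refl _, hβ1⟩
        have hle : nhdsWithin t₀ (Ioi t₀) ≤ nhdsWithin t₀ {t₀}ᶜ :=
          nhdsWithin_mono _ (fun x hx => ne_of_gt hx)
        have := (hev.filter_mono hle).and ((hcl.filter_mono nhdsWithin_le_nhds).and
          (Filter.eventually_mem_set.2 hmem))
        obtain ⟨c, h1, ⟨h2a, h2b⟩, h3⟩ := this.exists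
        refine ⟨c, h3, ?_, h2b⟩
        have hden : 0 < c - t₀ := sub_pos.2 h3.1
        rcases div_pos_iff.1 h1 with ⟨hx, hy⟩ | ⟨hx, hy⟩
        · have : φ t₀ < φ c := by linarith
          linarith [hm₀ ▸ this]
        · linarith
      obtain ⟨c, hcmem, hc1, hc2⟩ := hR
      have hfa : ⌊φ a⌋ = m₀ - 1 := by
        have h1 : ⌊φ a⌋ = ⌊φ c'⌋ := by
          apply floor_eq_of_no_int φ hcont a c' (le_of_lt hc'mem.1)
          intro t ht m hm
          have htab : t ∈ Icc a b := ⟨ht.1, le_trans ht.2 (by linarith [hc'mem.2, ht₀ab.2])⟩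
          have htT := (hT t htab).1 ⟨m, hm⟩
          have := T.min'_le t htT
          rw [← ht₀def] at this
          linarith [ht.2, hc'mem.2]
        rw [h1, Int.floor_eq_iff]
        constructor <;> push_cast <;> linarith
      have hfc : ⌊φ c⌋ = m₀ := by
        rw [Int.floor_eq_iff]
        constructor <;> push_cast <;> linarith
      have hIH := ih T' c b hcard' (le_trans (le_of_lt hcmem.2) hβ2)
        (by
          intro t ht
          constructor
          · intro hex
            have htab : t ∈ Icc a b := ⟨le_trans (le_of_lt (lt_trans ht₀ab.1 hcmem.1)) ht.1, ht.2⟩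
            have htT := (hT t htab).1 hex
            refine Finset.mem_erase.2 ⟨?_, htT⟩
            intro he; rw [he] at ht; linarith [ht.1, hcmem.1]
          · intro htT'
            have htT := Finset.mem_erase.1 htT' |>.2
            have := hTsub t htT
            exact (hT t ⟨le_of_lt this.1, le_of_lt this.2⟩).2 htT)
        (by
          intro t htT'
          have htT := Finset.mem_erase.1 htT' |>.2
          exact ⟨lt_of_lt_of_le hcmem.2 (hβ3 t htT'), (hTsub t htT).2⟩)
        (fun t htT' => hreg t (Finset.mem_erase.1 htT' |>.2))
      have hsum : ∑ t ∈ T, (if 0 < φ' t then (1:ℤ) else -1)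
          = (if 0 < φ' t₀ then (1:ℤ) else -1) + ∑ t ∈ T', (if 0 < φ' t then (1:ℤ) else -1) :=
        (Finset.add_sum_erase T _ ht₀T).symm
      rw [hsum, if_pos hpos, ← hIH, hfc, hfa]
      ring

end AuxIndexJump

open Set Filter in
set_option maxHeartbeats 1600000 in
/-- The jump formula: the difference of indices `ind_p(γ) − ind_q(γ)` equals the signed
number of transversal intersections of `γ` with the open segment from `q` to `p`. -/
theorem index_jump_formula (γ : ℝ → ℂ) (hγ : ContDiff ℝ 1 γ)
    (hper : ∀ t, γ (t + 1) = γ t) (p q : ℂ)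
    (hp : ∀ t, γ t ≠ p) (hq : ∀ t, γ t ≠ q) (hpq : p ≠ q)
    (hZ : {t ∈ Set.Ico (0:ℝ) 1 |
        ∃ s : ℝ, 0 < s ∧ s < 1 ∧ γ t = q + (s : ℂ) * (p - q)}.Finite)
    (hreg : ∀ t ∈ {t ∈ Set.Ico (0:ℝ) 1 |
        ∃ s : ℝ, 0 < s ∧ s < 1 ∧ γ t = q + (s : ℂ) * (p - q)},
      (q - p).re * (deriv γ t).im - (q - p).im * (deriv γ t).re ≠ 0) :
    (1 / (2 * (Real.pi : ℂ) * Complex.I)) * (∫ t in (0:ℝ)..1, deriv γ t / (γ t - p))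
      - (1 / (2 * (Real.pi : ℂ) * Complex.I)) *
          (∫ t in (0:ℝ)..1, deriv γ t / (γ t - q))
      = ((∑ t ∈ hZ.toFinset,
          Real.sign ((q - p).re * (deriv γ t).im - (q - p).im * (deriv γ t).re) : ℝ) : ℂ) := by
  classical
  have hπ : (0:ℝ) < Real.pi := Real.pi_pos
  have h2π : (2 * Real.pi) ≠ 0 := by positivity
  set Dd : ℝ → ℝ := fun t => (q - p).re * (deriv γ t).im - (q - p).im * (deriv γ t).re with hDd
  have hdγ : ∀ t, HasDerivAt γ (deriv γ t) t := fun t =>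
    ((hγ.differentiable one_ne_zero) t).hasDerivAt
  have hγ'cont : Continuous (deriv γ) := hγ.continuous_deriv le_rfl
  have hγ'per : ∀ t, deriv γ (t + 1) = deriv γ t := by
    intro t
    have h : (fun x => γ (x + 1)) = γ := funext hper
    rw [← deriv_comp_add_const γ 1 t, h]
  have hγp : ∀ t, γ t - p ≠ 0 := fun t => sub_ne_zero.2 (hp t)
  have hγq : ∀ t, γ t - q ≠ 0 := fun t => sub_ne_zero.2 (hq t)
  have hpq' : p - q ≠ 0 := sub_ne_zero.2 hpq
  set ℓ : ℝ → ℂ := fun t => deriv γ t / (γ t - p) - deriv γ t / (γ t - q) with hℓ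
  have hcont1 : Continuous fun t => deriv γ t / (γ t - p) :=
    hγ'cont.div (hγ.continuous.sub continuous_const) hγp
  have hcont2 : Continuous fun t => deriv γ t / (γ t - q) :=
    hγ'cont.div (hγ.continuous.sub continuous_const) hγq
  have hℓcont : Continuous ℓ := hcont1.sub hcont2
  have hℓper : ∀ t, ℓ (t + 1) = ℓ t := by
    intro t; simp only [hℓ, hper, hγ'per]
  set f : ℝ → ℂ := fun t => (γ t - p) / (γ t - q) with hf
  have hfne : ∀ t, f t ≠ 0 := fun t => div_ne_zero (hγp t) (hγq t)
  have hdf : ∀ t, HasDerivAt f (f t * ℓ t) t := by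
    intro t
    have h1 : HasDerivAt (fun u => γ u - p) (deriv γ t) t := (hdγ t).sub_const p
    have h2 : HasDerivAt (fun u => γ u - q) (deriv γ t) t := (hdγ t).sub_const q
    have h3 := h1.div h2 (hγq t)
    refine h3.congr_deriv ?_
    simp only [hℓ, hf]
    field_simp [hγp t, hγq t]
  set F : ℝ → ℂ := fun t => ∫ s in (0:ℝ)..t, ℓ s with hF
  have hdF : ∀ t, HasDerivAt F (ℓ t) t := fun t =>
    intervalIntegral.integral_hasDerivAt_right (hℓcont.intervalIntegrable _ _)
      (hℓcont.stronglyMeasurableAtFilter _ _) hℓcont.continuousAt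
  have hF0 : F 0 = 0 := intervalIntegral.integral_same
  have hfF : ∀ t, f t = f 0 * Complex.exp (F t) := by
    have hconst : ∀ t, f t * Complex.exp (-F t) = f 0 * Complex.exp (-F 0) := by
      intro t
      have hder : ∀ u, HasDerivAt (fun w => f w * Complex.exp (-F w)) 0 u := by
        intro u
        have he : HasDerivAt (fun w => Complex.exp (-F w)) (Complex.exp (-F u) * (-ℓ u)) u :=
          ((hdF u).neg).cexp
        have h4 := (hdf u).mul he
        refine h4.congr_deriv ?_
        ring
      exact is_const_of_deriv_eq_zero (fun u => ((hder u).differentiableAt))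
        (fun u => (hder u).deriv) t 0
    intro t
    have h := hconst t
    rw [hF0, neg_zero, Complex.exp_zero, mul_one] at h
    calc f t = f t * Complex.exp (-F t) * Complex.exp (F t) := by
          rw [mul_assoc, ← Complex.exp_add]
          simp
      _ = f 0 * Complex.exp (F t) := by rw [h]
  have hFper : ∀ t, F (t + 1) = F t + F 1 := by
    have hder : ∀ u, HasDerivAt (fun w => F (w + 1) - F w) 0 u := by
      intro u
      have h1 : HasDerivAt (fun w => F (w + 1)) (ℓ (u + 1)) u := by
        have hg : HasDerivAt (fun w : ℝ => w + 1) 1 u := (hasDerivAt_id u).add_const 1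
        have h2 := HasDerivAt.scomp u (hdF (u + 1)) hg
        simpa [Function.comp_def] using h2
      have h3 := h1.sub (hdF u)
      rw [hℓper u, sub_self] at h3
      exact h3
    intro t
    have h5 := is_const_of_deriv_eq_zero (𝕜 := ℝ) (f := fun w => F (w + 1) - F w)
        (fun u => (hder u).differentiableAt) (fun u => (hder u).deriv) t 0
    simp only [zero_add, hF0, sub_zero] at h5
    linear_combination h5
  have hf10 : f 1 = f 0 := by
    simp only [hf]
    rw [show (1:ℝ) = 0 + 1 by ring, hper]
  have hexpF1 : Complex.exp (F 1) = 1 := by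
    have h := (hfF 1).symm
    rw [hf10] at h
    nth_rewrite 2 [show f 0 = f 0 * 1 by ring] at h
    exact mul_left_cancel₀ (hfne 0) h
  obtain ⟨k, hk⟩ := Complex.exp_eq_one_iff.1 hexpF1
  have hint : (∫ t in (0:ℝ)..1, deriv γ t / (γ t - p))
      - (∫ t in (0:ℝ)..1, deriv γ t / (γ t - q)) = F 1 := by
    simp only [hF]
    rw [← intervalIntegral.integral_sub (hcont1.intervalIntegrable _ _)
      (hcont2.intervalIntegrable _ _)]
  -- the argument lift
  set θ : ℝ → ℝ := fun t => (f 0).arg + (F t).im with hθ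
  set φ : ℝ → ℝ := fun t => (θ t - Real.pi) / (2 * Real.pi) with hφ
  set φ' : ℝ → ℝ := fun t => (ℓ t).im / (2 * Real.pi) with hφ'
  have hdθ : ∀ t, HasDerivAt θ (ℓ t).im t := by
    intro t
    have h1 : HasDerivAt (fun u => (F u).im) (ℓ t).im t :=
      (Complex.imCLM.hasFDerivAt.comp_hasDerivAt t (hdF t))
    exact h1.const_add ((f 0).arg)
  have hdφ : ∀ t, HasDerivAt φ (φ' t) t := by
    intro t
    exact ((hdθ t).sub_const Real.pi).div_const (2 * Real.pi)
  have hfθ : ∀ t, f t = (↑(‖f 0‖ * Real.exp ((F t).re)) : ℂ)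
      * Complex.exp (↑(θ t) * Complex.I) := by
    intro t
    rw [hfF t]
    conv_lhs => rw [← Complex.norm_mul_exp_arg_mul_I (f 0), ← Complex.re_add_im (F t)]
    simp only [hθ]
    push_cast
    rw [add_mul, Complex.exp_add, Complex.exp_add]
    ring
  have hφ'per : ∀ t, φ' (t + 1) = φ' t := by
    intro t; simp only [hφ', hℓper t]
  -- crossing characterization
  have hcrossA : ∀ t, (∃ s : ℝ, 0 < s ∧ s < 1 ∧ γ t = q + (s : ℂ) * (p - q)) ↔
      (∃ r : ℝ, r < 0 ∧ f t = ↑r) := by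
    intro t
    constructor
    · rintro ⟨s, hs0, hs1, hγt⟩
      refine ⟨(s - 1) / s, div_neg_of_neg_of_pos (by linarith) hs0, ?_⟩
      have hsne : (s : ℂ) ≠ 0 := Complex.ofReal_ne_zero.2 (ne_of_gt hs0)
      simp only [hf]
      rw [hγt]
      have h1 : q + ↑s * (p - q) - p = ((s:ℂ) - 1) * (p - q) := by ring
      have h2 : q + ↑s * (p - q) - q = (s:ℂ) * (p - q) := by ring
      rw [h1, h2]
      push_cast
      rw [div_eq_div_iff (mul_ne_zero hsne hpq') hsne]
      ring
    · rintro ⟨r, hr, hftr⟩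
      simp only [hf] at hftr
      rw [div_eq_iff (hγq t)] at hftr
      have h1r : (1:ℝ) - r > 0 := by linarith
      have h1rc : ((1:ℂ) - (r:ℂ)) ≠ 0 := by
        have : ((1:ℂ) - (r:ℂ)) = ((1 - r : ℝ) : ℂ) := by push_cast; ring
        rw [this]
        exact Complex.ofReal_ne_zero.2 (ne_of_gt h1r)
      refine ⟨1 / (1 - r), one_div_pos.mpr h1r, by rw [div_lt_one h1r]; linarith, ?_⟩
      push_cast
      field_simp [h1rc]
      linear_combination (1 - (r:ℂ)) * hftr + (r:ℂ) * hftr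
  have hcrossB : ∀ t, (∃ r : ℝ, r < 0 ∧ f t = ↑r) ↔
      Complex.exp (↑(θ t) * Complex.I) = -1 := by
    intro t
    have hρpos : 0 < ‖f 0‖ * Real.exp ((F t).re) :=
      mul_pos (norm_pos_iff.2 (hfne 0)) (Real.exp_pos _)
    set ρ := ‖f 0‖ * Real.exp ((F t).re) with hρ
    constructor
    · rintro ⟨r, hr, hftr⟩
      have h1 : (↑ρ : ℂ) * Complex.exp (↑(θ t) * Complex.I) = ↑r := by
        rw [← hfθ t, hftr]
      have habs : ρ = |r| := by
        have h2 := congrArg (‖·‖) h1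
        simpa [Complex.norm_exp_ofReal_mul_I, Complex.norm_real, abs_of_pos hρpos] using h2
      have hr' : r = -ρ := by rw [habs, abs_of_neg hr]; ring
      rw [hr'] at h1
      have h3 : (↑ρ : ℂ) * Complex.exp (↑(θ t) * Complex.I) = ↑ρ * (-1) := by
        rw [h1]; push_cast; ring
      exact mul_left_cancel₀ (Complex.ofReal_ne_zero.2 (ne_of_gt hρpos)) h3
    · intro h
      refine ⟨-ρ, by linarith, ?_⟩
      rw [hfθ t, h, Complex.ofReal_neg]
      ring
  have hcrossC : ∀ t, Complex.exp (↑(θ t) * Complex.I) = -1 ↔ (∃ m : ℤ, φ t = ↑m) := by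
    intro t
    rw [show (-1 : ℂ) = Complex.exp (↑Real.pi * Complex.I) from (Complex.exp_pi_mul_I).symm]
    rw [Complex.exp_eq_exp_iff_exists_int]
    constructor
    · rintro ⟨n, hn⟩
      refine ⟨n, ?_⟩
      have h1 : (↑(θ t) : ℂ) * Complex.I = ↑(Real.pi + n * (2 * Real.pi)) * Complex.I := by
        rw [hn]; push_cast; ring
      have h2 : θ t = Real.pi + n * (2 * Real.pi) :=
        Complex.ofReal_inj.1 (mul_right_cancel₀ Complex.I_ne_zero h1)
      simp only [hφ]
      rw [h2]
      field_simp
      ring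
    · rintro ⟨m, hm⟩
      refine ⟨m, ?_⟩
      simp only [hφ] at hm
      rw [div_eq_iff h2π] at hm
      have h2 : θ t = Real.pi + m * (2 * Real.pi) := by linarith
      rw [h2]
      push_cast
      ring
  have hcross : ∀ t, (∃ s : ℝ, 0 < s ∧ s < 1 ∧ γ t = q + (s : ℂ) * (p - q)) ↔
      (∃ m : ℤ, φ t = ↑m) := fun t => (hcrossA t).trans ((hcrossB t).trans (hcrossC t))
  -- relation between φ' and the determinant at crossings
  have hkey : ∀ t, (∃ s : ℝ, 0 < s ∧ s < 1 ∧ γ t = q + (s : ℂ) * (p - q)) →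
      ∃ c : ℝ, 0 < c ∧ φ' t = c * Dd t := by
    rintro t ⟨s, hs0, hs1, hγt⟩
    have hsne : (s : ℂ) ≠ 0 := Complex.ofReal_ne_zero.2 (ne_of_gt hs0)
    have hs1ne : (s : ℂ) - 1 ≠ 0 := by
      rw [show ((s:ℂ) - 1) = ((s - 1 : ℝ) : ℂ) by push_cast; ring]
      exact Complex.ofReal_ne_zero.2 (by linarith)
    have hℓt : ℓ t = (↑((1:ℝ) / (s * (s - 1))) : ℂ) * (deriv γ t / (p - q)) := by
      simp only [hℓ]
      rw [hγt]
      have h1 : q + ↑s * (p - q) - p = ((s:ℂ) - 1) * (p - q) := by ring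
      have h2 : q + ↑s * (p - q) - q = (s:ℂ) * (p - q) := by ring
      rw [h1, h2]
      push_cast
      field_simp
      ring
    have hnsq : 0 < Complex.normSq (p - q) := Complex.normSq_pos.2 hpq'
    have hc0 : (0:ℝ) < 1 / (s * (1 - s) * Complex.normSq (p - q) * (2 * Real.pi)) := by
      have h1s : (0:ℝ) < 1 - s := by linarith
      have hmul : (0:ℝ) < s * (1 - s) * Complex.normSq (p - q) * (2 * Real.pi) := by positivity
      exact one_div_pos.mpr hmul
    refine ⟨1 / (s * (1 - s) * Complex.normSq (p - q) * (2 * Real.pi)), hc0, ?_⟩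
    simp only [hφ', hℓt, Complex.mul_im, Complex.ofReal_re, Complex.ofReal_im,
      Complex.div_im, hDd, Complex.sub_re, Complex.sub_im]
    have hsne' : s ≠ 0 := ne_of_gt hs0
    have hs1ne' : s - 1 ≠ 0 := by linarith
    have hs1ne'' : 1 - s ≠ 0 := by linarith
    have hnsqne : Complex.normSq (p - q) ≠ 0 := ne_of_gt hnsq
    field_simp
    ring
  -- choose a base point a which is not a crossing
  obtain ⟨a, haIco, haP⟩ : ∃ a, a ∈ Set.Ico (0:ℝ) 1 ∧
      ¬ (∃ s : ℝ, 0 < s ∧ s < 1 ∧ γ a = q + (s : ℂ) * (p - q)) := by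
    obtain ⟨a, ha⟩ := ((Set.Ico_infinite (show (0:ℝ) < 1 by norm_num)).diff hZ).nonempty
    exact ⟨a, ha.1, fun hPa => ha.2 (Set.mem_sep_iff.2 ⟨ha.1, hPa⟩)⟩
  have hPper : ∀ t, (∃ s : ℝ, 0 < s ∧ s < 1 ∧ γ (t+1) = q + (s : ℂ) * (p - q)) ↔
      (∃ s : ℝ, 0 < s ∧ s < 1 ∧ γ t = q + (s : ℂ) * (p - q)) := by
    intro t; rw [hper t]
  -- the crossing set over [a, a+1]
  have hCfin : {t : ℝ | t ∈ Set.Icc a (a+1) ∧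
      ∃ s : ℝ, 0 < s ∧ s < 1 ∧ γ t = q + (s : ℂ) * (p - q)}.Finite := by
    apply Set.Finite.subset (hZ.union (hZ.image (fun x => x + 1)))
    rintro t ⟨htI, hPt⟩
    by_cases h1 : t < 1
    · exact Or.inl (Set.mem_sep_iff.2 ⟨⟨le_trans haIco.1 htI.1, h1⟩, hPt⟩)
    · right
      refine ⟨t - 1, Set.mem_sep_iff.2 ⟨⟨by linarith [not_lt.1 h1], by linarith [htI.2, haIco.2]⟩, ?_⟩, by ring⟩
      rw [show t = (t - 1) + 1 by ring] at hPt
      exact (hPper (t-1)).1 hPt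
  set T := hCfin.toFinset with hTdef
  have hTmem : ∀ t, t ∈ T ↔ (t ∈ Set.Icc a (a+1) ∧
      ∃ s : ℝ, 0 < s ∧ s < 1 ∧ γ t = q + (s : ℂ) * (p - q)) := by
    intro t; rw [hTdef, Set.Finite.mem_toFinset]; rfl
  have hTIoo : ∀ t ∈ T, t ∈ Set.Ioo a (a+1) := by
    intro t htT
    obtain ⟨htI, hPt⟩ := (hTmem t).1 htT
    constructor
    · rcases lt_or_eq_of_le htI.1 with h | h
      · exact h
      · exact absurd (h ▸ hPt) haP
    · rcases lt_or_eq_of_le htI.2 with h | h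
      · exact h
      · exfalso; rw [h] at hPt; exact haP ((hPper a).1 hPt)
  have hDT : ∀ t ∈ T, Dd t ≠ 0 := by
    intro t htT
    obtain ⟨htI, hPt⟩ := (hTmem t).1 htT
    by_cases h1 : t < 1
    · exact hreg t (Set.mem_sep_iff.2 ⟨⟨le_trans haIco.1 htI.1, h1⟩, hPt⟩)
    · have ht1 : t - 1 ∈ Set.Ico (0:ℝ) 1 :=
        ⟨by linarith [not_lt.1 h1], by linarith [htI.2, haIco.2]⟩
      rw [show t = (t - 1) + 1 by ring] at hPt
      have hP1 := (hPper (t-1)).1 hPt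
      have h2 := hreg (t-1) (Set.mem_sep_iff.2 ⟨ht1, hP1⟩)
      simp only [hDd] at h2 ⊢
      rw [show t = (t - 1) + 1 by ring, hγ'per (t-1)]
      exact h2
  have hcount := count_lemma φ φ' hdφ T.card T a (a+1) rfl (by linarith) ?_ hTIoo ?_
  rotate_left
  · intro t htI
    rw [hTmem t, ← hcross t]
    tauto
  · intro t htT
    obtain ⟨_, hPt⟩ := (hTmem t).1 htT
    obtain ⟨c, hc, hφ'c⟩ := hkey t hPt
    rw [hφ'c]
    exact mul_ne_zero (ne_of_gt hc) (hDT t htT)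
  -- the floor difference is k
  have hφper : φ (a+1) = φ a + k := by
    have hFa : F (a+1) = F a + F 1 := hFper a
    have hIm : (F (a+1)).im = (F a).im + (k : ℝ) * (2 * Real.pi) := by
      rw [hFa, hk]
      simp [Complex.add_im, Complex.mul_im]
      try ring
    simp only [hφ, hθ, hIm]
    field_simp
    ring
  have hfloor : ⌊φ (a+1)⌋ = ⌊φ a⌋ + k := by
    rw [hφper]
    exact_mod_cast Int.floor_add_intCast (φ a) k
  have hk_sum : (k : ℤ) = ∑ t ∈ T, (if 0 < φ' t then (1:ℤ) else -1) := by
    rw [← hcount, hfloor]; ring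
  -- convert the sum of ±1 to the sum of signs
  have hsum1 : ((∑ t ∈ T, (if 0 < φ' t then (1:ℤ) else -1) : ℤ) : ℝ)
      = ∑ t ∈ T, Real.sign (Dd t) := by
    rw [Int.cast_sum]
    apply Finset.sum_congr rfl
    intro t htT
    obtain ⟨_, hPt⟩ := (hTmem t).1 htT
    obtain ⟨c, hc, hφ'c⟩ := hkey t hPt
    rcases lt_trichotomy (Dd t) 0 with h | h | h
    · rw [Real.sign_of_neg h, if_neg (by rw [hφ'c]; nlinarith)]
      norm_num
    · exact absurd h (hDT t htT)
    · rw [Real.sign_of_pos h, if_pos (by rw [hφ'c]; nlinarith)]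
      norm_num
  have hZmem : ∀ t, t ∈ hZ.toFinset ↔ (t ∈ Set.Ico (0:ℝ) 1 ∧
      ∃ s : ℝ, 0 < s ∧ s < 1 ∧ γ t = q + (s : ℂ) * (p - q)) := by
    intro t; rw [Set.Finite.mem_toFinset]; rfl
  have hsum2 : ∑ t ∈ T, Real.sign (Dd t) = ∑ t ∈ hZ.toFinset, Real.sign (Dd t) := by
    apply Finset.sum_nbij' (fun t => if t < 1 then t else t - 1)
      (fun t => if a < t then t else t + 1)
    · -- maps T to Z
      intro t htT
      obtain ⟨htI, hPt⟩ := (hTmem t).1 htT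
      by_cases h1 : t < 1
      · rw [if_pos h1, hZmem]
        exact ⟨⟨le_trans haIco.1 htI.1, h1⟩, hPt⟩
      · rw [if_neg h1, hZmem]
        refine ⟨⟨by linarith [not_lt.1 h1], by linarith [htI.2, haIco.2]⟩, ?_⟩
        rw [show t = (t - 1) + 1 by ring] at hPt
        exact (hPper (t-1)).1 hPt
    · -- maps Z to T
      intro t htZ
      obtain ⟨htI, hPt⟩ := (hZmem t).1 htZ
      by_cases h1 : a < t
      · rw [if_pos h1, hTmem]
        exact ⟨⟨le_of_lt h1, by linarith [htI.2, haIco.1]⟩, hPt⟩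
      · rw [if_neg h1, hTmem]
        have hta : t < a := by
          rcases lt_or_eq_of_le (not_lt.1 h1) with h | h
          · exact h
          · exact absurd (h ▸ hPt) haP
        exact ⟨⟨by linarith [htI.1, haIco.2], by linarith⟩, (hPper t).2 hPt⟩
    · -- left inverse
      intro t htT
      have hIoo := hTIoo t htT
      by_cases h1 : t < 1
      · rw [if_pos h1, if_pos hIoo.1]
      · rw [if_neg h1]
        rw [if_neg (by simp at hIoo ⊢; linarith [hIoo.2])]
        ring
    · -- right inverse
      intro t htZ
      obtain ⟨htI, hPt⟩ := (hZmem t).1 htZ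
      by_cases h1 : a < t
      · rw [if_pos h1, if_pos htI.2]
      · rw [if_neg h1, if_neg (by simp; linarith [htI.1])]
        ring
    · -- values agree
      intro t htT
      by_cases h1 : t < 1
      · rw [if_pos h1]
      · rw [if_neg h1]
        have h5 := hγ'per (t-1)
        rw [show t - 1 + 1 = t by ring] at h5
        simp only [hDd]
        rw [h5]
  -- final assembly
  have hLHS : (1 / (2 * (Real.pi : ℂ) * Complex.I)) *
        (∫ t in (0:ℝ)..1, deriv γ t / (γ t - p))
      - (1 / (2 * (Real.pi : ℂ) * Complex.I)) *
        (∫ t in (0:ℝ)..1, deriv γ t / (γ t - q)) = (k : ℂ) := by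
    rw [← mul_sub, hint, hk]
    have hπc : (Real.pi : ℂ) ≠ 0 := Complex.ofReal_ne_zero.2 (ne_of_gt hπ)
    field_simp
  rw [hLHS]
  have : (∑ t ∈ hZ.toFinset, Real.sign (Dd t)) = (k : ℝ) := by
    rw [← hsum2, ← hsum1, ← hk_sum]
  rw [this]
  push_cast
  ring
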